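/- Work in the Cantor space 2^{ω^{<ω}} of subsets of ω^{<ω}. Let W₁ = {A ⊆ ω^{<ω} : there is no f ∈ ℕ^ℕ with f↾n ∈ A for infinitely many n}, W₂ = {A ⊆ ω^{<ω} : there is no f ∈ ℕ^ℕ such that for infinitely many n there exists s ⊇ f↾n with s ∈ A}, and NWD = {A ⊆ ω^{<ω} : for every s ∈ ω^{<ω} there exists t ⊇ s such that every r ⊇ t satisfies r ∉ A}. Then W₁ ⊆ NWD and W₂ ⊆ NWD; NWD is a Borel subset of 2^{ω^{<ω}}; and no A ⊆ ω^{<ω} satisfies both A ∈ NWD and (ω^{<ω} \ A) ∈ NWD. Consequently, for i = 1, 2, the Borel set NWD separates the ideal W_i from its dual filter {ω^{<ω} \ A : A ∈ W_i}. -/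
import Mathlib


/-- W₁: the ideal of well-founded subrelations of `ω^{<ω}` (as characteristic
functions): no branch `f` has infinitely many initial segments in `A`. -/
def Wone : Set (List ℕ → Bool) :=
  {A | ¬ ∃ f : ℕ → ℕ, {n | A (List.ofFn fun i : Fin n => f i) = true}.Infinite}

/-- W₂: the ideal generated by well-founded subtrees: there is no branch `f` such
that for infinitely many `n` some extension of `f↾n` is in `A`. -/
def Wtwo : Set (List ℕ → Bool) :=
  {A | ¬ ∃ f : ℕ → ℕ,
    {n | ∃ s : List ℕ, (List.ofFn fun i : Fin n => f i) <+: s ∧ A s = true}.Infinite}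

/-- NWD: the ideal of nowhere dense subsets of `ω^{<ω}`: every `s` has an extension
`t` all of whose extensions avoid `A`. -/
def NWD : Set (List ℕ → Bool) :=
  {A | ∀ s : List ℕ, ∃ t : List ℕ, s <+: t ∧ ∀ r : List ℕ, t <+: r → A r = false}

lemma ofFn_prefix (s : List ℕ) (n : ℕ) (hn : s.length ≤ n) :
    s <+: List.ofFn (fun i : Fin n => s.getD i 0) := by
  rw [List.prefix_iff_eq_take]
  apply List.ext_getElem
  · simp [List.length_take, hn]
  · intro i h1 h2
    simp only [List.getElem_take, List.getElem_ofFn]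
    rw [List.getD_eq_getElem s 0 h1]

lemma wtwo_subset : Wtwo ⊆ NWD := by
  intro A hA
  by_contra h
  simp only [NWD, Set.mem_setOf_eq] at h
  push_neg at h
  obtain ⟨s, hs⟩ := h
  apply hA
  refine ⟨fun i => s.getD i 0, ?_⟩
  apply Set.Infinite.mono (s := Set.Ici s.length) ?_ (Set.Ici_infinite _)
  intro n hn
  obtain ⟨r, hr, hr2⟩ := hs _ (ofFn_prefix s n hn)
  exact ⟨r, hr, by simpa using hr2⟩

lemma wone_subset : Wone ⊆ NWD := by
  intro A hA
  by_contra h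
  simp only [NWD, Set.mem_setOf_eq] at h
  push_neg at h
  obtain ⟨s, hs⟩ := h
  have hs' : ∀ t : List ℕ, ∃ r : List ℕ, s <+: t → (t <+: r ∧ A r = true) := by
    intro t
    by_cases ht : s <+: t
    · obtain ⟨r, hr1, hr2⟩ := hs t ht
      exact ⟨r, fun _ => ⟨hr1, by simpa using hr2⟩⟩
    · exact ⟨t, fun h => absurd h ht⟩
  choose g hg using hs'
  set L : ℕ → List ℕ := fun n => Nat.rec (g s) (fun _ ih => g (ih ++ [0])) n with hL
  have hL0 : L 0 = g s := rfl
  have hLsucc : ∀ n, L (n + 1) = g (L n ++ [0]) := fun n => rfl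
  have key : ∀ n, s <+: L n ∧ A (L n) = true := by
    intro n
    induction n with
    | zero => exact hg s s.prefix_refl
    | succ n ih =>
        have h1 : s <+: L n ++ [0] := ih.1.trans ((L n).prefix_append [0])
        have := hg (L n ++ [0]) h1
        exact ⟨h1.trans this.1, this.2⟩
  have step : ∀ n, L n ++ [0] <+: L (n + 1) := by
    intro n
    have h1 : s <+: L n ++ [0] := (key n).1.trans ((L n).prefix_append _)
    exact (hg (L n ++ [0]) h1).1
  have mono : ∀ n, L n <+: L (n + 1) := fun n =>
    ((L n).prefix_append [0]).trans (step n)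
  have len_mono : StrictMono (fun n => (L n).length) := by
    apply strictMono_nat_of_lt_succ
    intro n
    have := (step n).length_le
    simp at this
    omega
  have chain : ∀ {m n : ℕ}, m ≤ n → L m <+: L n := by
    intro m n h
    induction n with
    | zero => simp [Nat.le_zero.mp h]
    | succ n ih =>
        rcases Nat.lt_or_ge m (n + 1) with h' | h'
        · exact (ih (by omega)).trans (mono n)
        · have : m = n + 1 := by omega
          simp [this]
  have len_ge : ∀ n, n ≤ (L n).length := by
    intro n
    induction n with
    | zero => omega
    | succ n ih =>
        have h2 : (L n).length < (L (n + 1)).length := len_mono (Nat.lt_succ_self n)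
        omega
  set f : ℕ → ℕ := fun i => (L (i + 1)).getD i 0 with hf
  have ofFn_eq : ∀ n, (List.ofFn fun i : Fin (L n).length => f i) = L n := by
    intro n
    apply List.ext_getElem
    · simp
    · intro i h1 h2
      simp only [List.getElem_ofFn, hf]
      have hi : i < (L (i + 1)).length := lt_of_lt_of_le (Nat.lt_succ_self i) (len_ge (i + 1))
      rw [List.getD_eq_getElem _ 0 hi]
      rcases Nat.le_total (i + 1) n with h | h
      · exact (chain h).getElem hi
      · exact ((chain h).getElem h2).symm
  apply hA
  refine ⟨f, Set.infinite_of_injective_forall_mem (f := fun n => (L n).length)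
    len_mono.injective ?_⟩
  intro n
  simp only [Set.mem_setOf_eq, ofFn_eq n]
  exact (key n).2

lemma nwd_both (A : List ℕ → Bool) (h1 : A ∈ NWD) (h2 : (fun s => ! A s) ∈ NWD) : False := by
  obtain ⟨t, -, ht⟩ := h1 []
  obtain ⟨t', htt', ht'⟩ := h2 t
  have e1 : A t' = false := ht t' htt'
  have e2 : (! A t') = false := ht' t' t'.prefix_refl
  simp [e1] at e2

lemma nwd_meas : @MeasurableSet (List ℕ → Bool) (borel (List ℕ → Bool)) NWD := by
  letI : MeasurableSpace (List ℕ → Bool) := borel _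
  haveI : BorelSpace (List ℕ → Bool) := ⟨rfl⟩
  have heq : NWD = ⋂ s : List ℕ, ⋃ t : {t : List ℕ // s <+: t}, ⋂ r : List ℕ,
      {A : List ℕ → Bool | t.1 <+: r → A r = false} := by
    ext A
    simp only [NWD, Set.mem_setOf_eq, Set.mem_iInter, Set.mem_iUnion, Subtype.exists]
    constructor
    · intro h s
      obtain ⟨t, ht1, ht2⟩ := h s
      exact ⟨t, ht1, ht2⟩
    · intro h s
      obtain ⟨t, ht1, ht2⟩ := h s
      exact ⟨t, ht1, ht2⟩
  rw [heq]
  apply MeasurableSet.iInter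
  intro s
  apply MeasurableSet.iUnion
  intro t
  apply MeasurableSet.iInter
  intro r
  by_cases htr : t.1 <+: r
  · have : {A : List ℕ → Bool | t.1 <+: r → A r = false}
        = (fun A : List ℕ → Bool => A r) ⁻¹' {false} := by
      ext A; simp [htr]
    rw [this]
    exact (((isOpen_discrete ({false} : Set Bool)).preimage (continuous_apply r))).measurableSet
  · have : {A : List ℕ → Bool | t.1 <+: r → A r = false} = Set.univ := by
      ext A; simp [htr]
    rw [this]
    exact MeasurableSet.univ

theorem stmt14 :
    Wone ⊆ NWD ∧ Wtwo ⊆ NWD ∧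
    @MeasurableSet (List ℕ → Bool) (borel (List ℕ → Bool)) NWD ∧
    (¬ ∃ A : List ℕ → Bool, A ∈ NWD ∧ (fun s => ! A s) ∈ NWD) ∧
    (NWD ∩ {A | (fun s => ! A s) ∈ Wone} = ∅) ∧
    (NWD ∩ {A | (fun s => ! A s) ∈ Wtwo} = ∅) := by
  refine ⟨wone_subset, wtwo_subset, nwd_meas, ?_, ?_, ?_⟩
  · rintro ⟨A, h1, h2⟩; exact nwd_both A h1 h2
  · ext A
    simp only [Set.mem_inter_iff, Set.mem_setOf_eq, Set.mem_empty_iff_false, iff_false]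
    rintro ⟨h1, h2⟩
    exact nwd_both A h1 (wone_subset h2)
  · ext A
    simp only [Set.mem_inter_iff, Set.mem_setOf_eq, Set.mem_empty_iff_false, iff_false]
    rintro ⟨h1, h2⟩
    exact nwd_both A h1 (wtwo_subset h2)
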